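/- Let n ≥ 1 and Q ≥ 1 be integers and let G_1, …, G_Q be independent random variables, each distributed as the sum of n independent exponential(1) random variables (i.e. Gamma(n,1)). Let T > 0 satisfy T ≤ (1/2) ∑_{l=1}^{Q} 1/(l+1). Then P( ∑_{l=1}^{Q} G_l / ((l+1) n) < T ) ≤ Q · exp(−(log 2 − 1/2) n). -/

import Mathlib

open MeasureTheory ProbabilityTheory Set

lemma measurable_gammaPDF' (a r : ℝ) : Measurable (gammaPDF a r) :=
  (measurable_gammaPDFReal a r).ennreal_ofReal

lemma gamma_tail_bound (n : ℕ) (hn : 1 ≤ n) :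
    gammaMeasure n 1 (Set.Iio ((n : ℝ) / 2)) ≤
      ENNReal.ofReal (Real.exp (-(Real.log 2 - 1 / 2) * n)) := by
  have hn0 : (0:ℝ) < n := by positivity
  set c : ℝ := Real.exp (-(Real.log 2 - 1 / 2) * n) with hc
  have hc0 : 0 ≤ c := Real.exp_nonneg _
  rw [gammaMeasure, withDensity_apply _ measurableSet_Iio]
  have key : ∀ x ∈ Set.Iio ((n:ℝ)/2),
      gammaPDF n 1 x ≤ ENNReal.ofReal c * gammaPDF n 2 x := by
    intro x hx
    rcases lt_or_ge x 0 with h | h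
    · simp [gammaPDF_of_neg h]
    · rw [gammaPDF_of_nonneg h, gammaPDF_of_nonneg h,
        ← ENNReal.ofReal_mul hc0]
      apply ENNReal.ofReal_le_ofReal
      have hΓ : 0 < Real.Gamma n := Real.Gamma_pos_of_pos hn0
      have hfac : (0:ℝ) ≤ x ^ ((n:ℝ)-1) / Real.Gamma n := by positivity
      have hexp : Real.exp (-(1 * x)) ≤ c * 2 ^ (n:ℝ) * Real.exp (-(2 * x)) := by
        rw [hc, ← Real.exp_log (show (0:ℝ) < 2 ^ (n:ℝ) by positivity),
          ← Real.exp_add, ← Real.exp_add]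
        apply Real.exp_le_exp.mpr
        rw [Real.log_rpow (by norm_num)]
        have hx2 : x ≤ (n:ℝ) / 2 := le_of_lt hx
        nlinarith
      have hmul := mul_le_mul_of_nonneg_left hexp hfac
      rw [Real.one_rpow]
      refine le_trans (le_of_eq ?_) (le_trans hmul (le_of_eq ?_)) <;> ring
  calc ∫⁻ x in Iio ((n:ℝ)/2), gammaPDF n 1 x
      ≤ ∫⁻ x in Iio ((n:ℝ)/2), ENNReal.ofReal c * gammaPDF n 2 x :=
        setLIntegral_mono ((measurable_gammaPDF' n 2).const_mul _) key
    _ = ENNReal.ofReal c * ∫⁻ x in Iio ((n:ℝ)/2), gammaPDF n 2 x :=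
        lintegral_const_mul _ (measurable_gammaPDF' n 2)
    _ ≤ ENNReal.ofReal c * ∫⁻ x, gammaPDF n 2 x := by
        gcongr
        exact Measure.restrict_le_self
    _ = ENNReal.ofReal c := by
        rw [lintegral_gammaPDF_eq_one hn0 (by norm_num)]
        simp

/-- If `G₁, …, G_Q` are independent Gamma(n,1) random variables and
`T ≤ (1/2) ∑_{l=1}^{Q} 1/(l+1)`, then
`P( ∑_{l=1}^{Q} G_l / ((l+1) n) < T ) ≤ Q exp(−(log 2 − 1/2) n)`. -/
theorem statement5 {Ω : Type*} [MeasurableSpace Ω]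
    (P : Measure Ω) [IsProbabilityMeasure P]
    (n Q : ℕ) (hn : 1 ≤ n) (hQ : 1 ≤ Q)
    (G : ℕ → Ω → ℝ)
    (hmeas : ∀ l, Measurable (G l))
    (hindep : iIndepFun G P)
    (hdist : ∀ l ∈ Finset.Icc 1 Q, Measure.map (G l) P = gammaMeasure n 1)
    (T : ℝ) (hT : 0 < T)
    (hT2 : T ≤ (1 / 2) * ∑ l ∈ Finset.Icc 1 Q, (1 : ℝ) / (l + 1)) :
    P {ω | ∑ l ∈ Finset.Icc 1 Q, G l ω / ((l + 1) * n) < T} ≤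
      ENNReal.ofReal (Q * Real.exp (-(Real.log 2 - 1 / 2) * n)) := by
  have hn0 : (0:ℝ) < n := by positivity
  set s := Finset.Icc 1 Q with hs
  have hsub : {ω | ∑ l ∈ s, G l ω / ((l + 1) * n) < T} ⊆
      ⋃ l ∈ s, {ω | G l ω < (n:ℝ) / 2} := by
    intro ω hω
    by_contra hcon
    simp only [Set.mem_iUnion, Set.mem_setOf_eq, not_exists, not_lt] at hcon
    have hle : T ≤ ∑ l ∈ s, G l ω / ((l + 1) * n) := by
      refine le_trans hT2 ?_
      rw [Finset.mul_sum]
      apply Finset.sum_le_sum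
      intro l hl
      have h1 : (n:ℝ)/2 ≤ G l ω := hcon l hl
      have hl1 : (0:ℝ) < (l:ℝ)+1 := by positivity
      have heq : (1:ℝ)/2 * (1/((l:ℝ)+1)) = ((n:ℝ)/2) / (((l:ℝ)+1)*n) := by
        field_simp
      rw [heq]
      gcongr
    exact (not_lt.mpr hle) hω
  calc P {ω | ∑ l ∈ s, G l ω / ((l + 1) * n) < T}
      ≤ P (⋃ l ∈ s, {ω | G l ω < (n:ℝ) / 2}) := measure_mono hsub
    _ ≤ ∑ l ∈ s, P {ω | G l ω < (n:ℝ) / 2} := measure_biUnion_finset_le s _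
    _ ≤ ∑ _l ∈ s, ENNReal.ofReal (Real.exp (-(Real.log 2 - 1 / 2) * n)) := by
        apply Finset.sum_le_sum
        intro l hl
        have : {ω | G l ω < (n:ℝ) / 2} = G l ⁻¹' Set.Iio ((n:ℝ)/2) := rfl
        rw [this, ← Measure.map_apply (hmeas l) measurableSet_Iio, hdist l hl]
        exact gamma_tail_bound n hn
    _ = ENNReal.ofReal (Q * Real.exp (-(Real.log 2 - 1 / 2) * n)) := by
        rw [Finset.sum_const, hs, Nat.card_Icc]
        simp only [Nat.add_sub_cancel, nsmul_eq_mul]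
        rw [← ENNReal.ofReal_natCast Q, ← ENNReal.ofReal_mul (by positivity)]
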